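/- Let f : [a,b] → ℝ be convex and x, y, z ∈ [a,b] with (x+y+z)/3 = (a+b)/2. Then 2·(f(x)+f(y)+f(z))/3 ≤ f(a) + f(b) and 2·f((x+y+z)/3) ≤ f(a) + f(b). -/

import Mathlib

theorem stmt_9 (a b : ℝ) (hab : a ≤ b) (f : ℝ → ℝ)
    (hconv : ∀ x ∈ Set.Icc a b, ∀ y ∈ Set.Icc a b, ∀ t ∈ Set.Icc (0:ℝ) 1,
      f (t * x + (1 - t) * y) ≤ t * f x + (1 - t) * f y)
    (x y z : ℝ) (hx : x ∈ Set.Icc a b) (hy : y ∈ Set.Icc a b)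
    (hz : z ∈ Set.Icc a b) (hc : (x + y + z) / 3 = (a + b) / 2) :
    2 * ((f x + f y + f z) / 3) ≤ f a + f b ∧
    2 * f ((x + y + z) / 3) ≤ f a + f b := by
  have hpt : ∀ u ∈ Set.Icc a b, (b - a) * f u ≤ (b - u) * f a + (u - a) * f b := by
    intro u hu
    rcases eq_or_lt_of_le hab with h | h
    · have hu1 : u = a := le_antisymm (h ▸ hu.2) hu.1
      subst hu1; rw [← h]; simp
    · have hba : (0:ℝ) < b - a := by linarith
      have ht : (b - u) / (b - a) ∈ Set.Icc (0:ℝ) 1 := by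
        constructor
        · exact div_nonneg (by linarith [hu.2]) (by linarith)
        · rw [div_le_one hba]; linarith [hu.1]
      have := hconv a (Set.left_mem_Icc.mpr hab) b (Set.right_mem_Icc.mpr hab)
        ((b - u) / (b - a)) ht
      have harg : (b - u) / (b - a) * a + (1 - (b - u) / (b - a)) * b = u := by
        field_simp; ring
      rw [harg] at this
      have h2 : (b - a) * f u ≤ (b - a) * ((b - u) / (b - a) * f a + (1 - (b - u) / (b - a)) * f b) :=
        mul_le_mul_of_nonneg_left this hba.le
      calc (b - a) * f u ≤ _ := h2
        _ = (b - u) * f a + (u - a) * f b := by field_simp; ring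
  have hmid : f ((a + b) / 2) ≤ (f a + f b) / 2 := by
    have := hconv a (Set.left_mem_Icc.mpr hab) b (Set.right_mem_Icc.mpr hab)
      (1/2) (by constructor <;> norm_num)
    have harg : (1/2 : ℝ) * a + (1 - 1/2) * b = (a + b) / 2 := by ring
    rw [harg] at this; linarith
  constructor
  · rcases eq_or_lt_of_le hab with h | h
    · have hxa : x = a := le_antisymm (h ▸ hx.2) hx.1
      have hya : y = a := le_antisymm (h ▸ hy.2) hy.1
      have hza : z = a := le_antisymm (h ▸ hz.2) hz.1
      subst hxa hya hza; rw [← h]; linarith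
    · have h1 := hpt x hx
      have h2 := hpt y hy
      have h3 := hpt z hz
      have hba : (0:ℝ) < b - a := by linarith
      have hsum : x + y + z = 3 * (a + b) / 2 := by linarith [hc]
      have : (b - a) * (f x + f y + f z) ≤ (b - a) * (3 / 2 * (f a + f b)) := by
        calc (b - a) * (f x + f y + f z)
            = (b - a) * f x + (b - a) * f y + (b - a) * f z := by ring
          _ ≤ (3 * b - (x + y + z)) * f a + ((x + y + z) - 3 * a) * f b := by linarith
          _ = (b - a) * (3 / 2 * (f a + f b)) := by rw [hsum]; ring
      have := le_of_mul_le_mul_left (by linarith : (b - a) * (f x + f y + f z) ≤ (b - a) * (3 / 2 * (f a + f b))) hba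
      linarith
  · rw [hc]; linarith
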